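/- Let (G,G⁺,u) be a simple dimension group with distinguished order unit, and let G̃ = {g ∈ G : τ(g) = τ'(g) for all traces τ, τ' of (G,G⁺,u)}. Then for every trace τ of (G,G⁺,u), the restriction of τ to G̃ is a surjective group homomorphism from G̃ onto the image subgroup I(G,G⁺,u), and its kernel equals the infinitesimal subgroup Inf(G) = {g ∈ G : τ'(g) = 0 for every trace τ'}. -/

import Mathlib

/-- A simple dimension group with distinguished order unit, given by an abelian group `G`,
a positive cone `P` and an order unit `u`. -/
structure IsSimpleDimensionGroup (G : Type*) [AddCommGroup G] (P : Set G) (u : G) : Prop where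
  countable : Countable G
  pos_sub : ∀ g : G, ∃ a ∈ P, ∃ b ∈ P, g = a - b
  pos_antisymm : ∀ g : G, g ∈ P → -g ∈ P → g = 0
  pos_add : ∀ a ∈ P, ∀ b ∈ P, a + b ∈ P
  unperforated : ∀ (n : ℕ) (a : G), 1 ≤ n → n • a ∈ P → a ∈ P
  riesz : ∀ a₁ a₂ b₁ b₂ : G,
    b₁ - a₁ ∈ P → b₂ - a₁ ∈ P → b₁ - a₂ ∈ P → b₂ - a₂ ∈ P →
    ∃ c : G, c - a₁ ∈ P ∧ c - a₂ ∈ P ∧ b₁ - c ∈ P ∧ b₂ - c ∈ P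
  simple : ∀ g ∈ P, g ≠ 0 → ∀ a : G, ∃ n : ℕ, n • g - a ∈ P
  unit_pos : u ∈ P
  unit_order : ∀ a : G, ∃ n : ℕ, n • u - a ∈ P

/-- A trace on `(G, P, u)`: a nonnegative group homomorphism to `ℝ` normalized at `u`. -/
def IsTrace {G : Type*} [AddCommGroup G] (P : Set G) (u : G) (τ : G →+ ℝ) : Prop :=
  (∀ g ∈ P, 0 ≤ τ g) ∧ τ u = 1

open Filter Topology Set

/-- Traces are uniformly bounded on each element, by the order-unit property. -/
lemma trace_abs_bound {G : Type*} [AddCommGroup G] {P : Set G} {u : G}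
    (hG : IsSimpleDimensionGroup G P u) (g : G) :
    ∃ C : ℝ, 0 ≤ C ∧ ∀ σ : G →+ ℝ, IsTrace P u σ → |σ g| ≤ C := by
  obtain ⟨n, hn⟩ := hG.unit_order g
  obtain ⟨m, hm⟩ := hG.unit_order (-g)
  refine ⟨max n m, le_max_of_le_left (Nat.cast_nonneg n), fun σ hσ => ?_⟩
  have h1 : 0 ≤ σ (n • u - g) := hσ.1 _ hn
  have h2 : 0 ≤ σ (m • u - -g) := hσ.1 _ hm
  rw [map_sub, map_nsmul, hσ.2, nsmul_eq_mul, mul_one] at h1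
  rw [map_sub, map_nsmul, map_neg, hσ.2, nsmul_eq_mul, mul_one] at h2
  rw [abs_le]
  constructor
  · have h3 : -(m:ℝ) ≤ σ g := by linarith
    exact le_trans (neg_le_neg (le_max_right (n:ℝ) m)) h3
  · exact le_trans (by linarith) (le_max_left (n:ℝ) m)

/-- A bounded power series vanishing on an uncountable subset of `(0,1)` has zero
coefficients. -/
lemma coeff_eq_zero_of_uncountable_zeros (c : ℕ → ℝ) (C : ℝ)
    (hC : ∀ i, |c i| ≤ C)
    (Z : Set ℝ) (hZ : ¬ Z.Countable) (hZsub : Z ⊆ Set.Ioo 0 1)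
    (hzero : ∀ s ∈ Z, ∑' i, c i * s ^ i = 0) : ∀ i, c i = 0 := by
  set p := FormalMultilinearSeries.ofScalars ℝ c with hp
  have hnorm : ∀ n, ‖p n‖ = |c n| := fun n => by
    rw [hp, FormalMultilinearSeries.ofScalars_norm, Real.norm_eq_abs]
  have hrad : 1 ≤ p.radius := by
    have := p.le_radius_of_bound C (r := 1) (fun n => by
      rw [hnorm]; simpa using hC n)
    simpa using this
  have hpos : (0 : ENNReal) < p.radius := lt_of_lt_of_le one_pos hrad
  have hOB : HasFPowerSeriesOnBall p.sum p 0 1 :=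
    (p.hasFPowerSeriesOnBall hpos).mono one_pos hrad
  have hsum_eq : ∀ s : ℝ, p.sum s = ∑' i, c i * s ^ i := fun s => by
    refine tsum_congr fun n => ?_
    rw [hp, FormalMultilinearSeries.ofScalars_apply_eq, smul_eq_mul]
  have hcover : Z ⊆ ⋃ n : ℕ, Z ∩ Set.Icc (1/(n+1) : ℝ) (1 - 1/(n+1)) := by
    intro s hs
    obtain ⟨hs0, hs1⟩ := hZsub hs
    obtain ⟨n, hn⟩ := exists_nat_one_div_lt (lt_min hs0 (by linarith : (0:ℝ) < 1 - s))
    refine Set.mem_iUnion.mpr ⟨n, hs, ?_, ?_⟩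
    · exact le_of_lt (lt_of_lt_of_le hn (min_le_left _ _))
    · have := lt_of_lt_of_le hn (min_le_right _ _); linarith
  have hpiece : ∃ n : ℕ, ¬ (Z ∩ Set.Icc (1/(n+1) : ℝ) (1 - 1/(n+1))).Countable := by
    by_contra h
    push_neg at h
    exact hZ ((Set.countable_iUnion h).mono hcover)
  obtain ⟨n₀, hW⟩ := hpiece
  set a : ℝ := 1/(n₀+1) with ha
  set b : ℝ := 1 - 1/(n₀+1) with hb
  have ha0 : 0 < a := by positivity
  have hb1 : b < 1 := by
    rw [hb]; have : (0:ℝ) < 1/(n₀+1) := by positivity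
    linarith
  set W : Set ℝ := Z ∩ Set.Icc a b with hWdef
  have hWinf : W.Infinite := by
    by_contra h
    exact hW ((Set.not_infinite.mp h).countable)
  obtain ⟨z₀, hz₀K, hacc⟩ :=
    hWinf.exists_accPt_of_subset_isCompact isCompact_Icc Set.inter_subset_right
  have hz₀ball : z₀ ∈ Metric.eball (0:ℝ) 1 := by
    rw [← ENNReal.coe_one, Metric.emetric_ball_nnreal]
    simp only [Metric.mem_ball, Real.dist_eq, sub_zero, ENNReal.coe_one, NNReal.coe_one]
    rw [abs_lt]
    constructor <;> [linarith [hz₀K.1]; linarith [hz₀K.2]]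
  have hA : AnalyticOnNhd ℝ p.sum (EMetric.ball 0 1) := hOB.analyticOnNhd
  have hpre : IsPreconnected (Metric.eball (0:ℝ) 1) := by
    rw [← ENNReal.coe_one, Metric.emetric_ball_nnreal]
    exact (convex_ball _ _).isPreconnected
  have hfreq : ∃ᶠ z in 𝓝[≠] z₀, p.sum z = 0 := by
    rw [accPt_iff_frequently] at hacc
    rw [frequently_nhdsWithin_iff]
    refine hacc.mono fun y hy => ⟨?_, hy.1⟩
    rw [hsum_eq]
    exact hzero y hy.2.1
  have hEq : Set.EqOn p.sum 0 (EMetric.ball (0:ℝ) 1) :=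
    hA.eqOn_zero_of_preconnected_of_frequently_eq_zero hpre hz₀ball hfreq
  have hev : p.sum =ᶠ[𝓝 (0:ℝ)] 0 :=
    Filter.eventually_of_mem
      (EMetric.isOpen_ball.mem_nhds (EMetric.mem_ball_self one_pos)) hEq
  have hp0 : p = 0 := hOB.hasFPowerSeriesAt.eq_zero_of_eventually hev
  intro i
  have : p i = 0 := by rw [hp0]; rfl
  exact (FormalMultilinearSeries.ofScalars_eq_zero ℝ i).mp this

/-- There is a sequence of traces whose function images are dense among all traces. -/
lemma exists_dense_trace_seq {G : Type*} [AddCommGroup G] [Countable G] (P : Set G) (u : G)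
    (τ : G →+ ℝ) (hτ : IsTrace P u τ) :
    ∃ e : ℕ → (G →+ ℝ), (∀ i, IsTrace P u (e i)) ∧
      ∀ σ : G →+ ℝ, IsTrace P u σ → ⇑σ ∈ closure (Set.range fun i => ⇑(e i)) := by
  classical
  let A : Set (G → ℝ) := {f | ∃ σ : G →+ ℝ, IsTrace P u σ ∧ ⇑σ = f}
  obtain ⟨D0, hD0c, hD0d⟩ := TopologicalSpace.exists_countable_dense (↥A)
  let D : Set (G → ℝ) := (↑) '' D0
  have hDc : D.Countable := hD0c.image _
  have hDA : D ⊆ A := by rintro f ⟨⟨f', hf'⟩, _, rfl⟩; exact hf'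
  have hAD : ∀ f ∈ A, f ∈ closure D := by
    intro f hf
    exact closure_subtype.mp (hD0d (⟨f, hf⟩ : ↥A))
  have hτA : ⇑τ ∈ A := ⟨τ, hτ, rfl⟩
  have hDne : D.Nonempty := by
    rcases D.eq_empty_or_nonempty with h | h
    · have := hAD _ hτA
      rw [h, closure_empty] at this
      exact absurd this (Set.notMem_empty _)
    · exact h
  obtain ⟨F, hF⟩ := hDc.exists_eq_range hDne
  have hFA : ∀ i, F i ∈ A := fun i => hDA (hF ▸ Set.mem_range_self i)
  choose e htr hcoe using hFA
  refine ⟨e, htr, fun σ hσ => ?_⟩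
  have hre : (fun i => ⇑(e i)) = F := funext hcoe
  rw [hre, ← hF]
  exact hAD _ ⟨σ, hσ, rfl⟩

/-- Main step: if `x` is in the image of every trace, it is the image of a single element
under all traces simultaneously. -/
lemma exists_uniform_preimage {G : Type*} [AddCommGroup G] {P : Set G} {u : G}
    (hG : IsSimpleDimensionGroup G P u) (x : ℝ)
    (hx : ∀ σ : G →+ ℝ, IsTrace P u σ → ∃ g : G, σ g = x)
    (τ : G →+ ℝ) (hτ : IsTrace P u τ) :
    ∃ g : G, ∀ σ : G →+ ℝ, IsTrace P u σ → σ g = x := by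
  haveI := hG.countable
  obtain ⟨e, htr, hdense⟩ := exists_dense_trace_seq P u τ hτ
  choose N hN0 hNb using fun g => trace_abs_bound hG g
  have hsumm : ∀ (s : ℝ), s ∈ Set.Ioo (0:ℝ) 1 → ∀ g : G,
      Summable (fun i : ℕ => (1-s)*s^i*(e i g)) := by
    intro s hs g
    refine Summable.of_norm_bounded (g := fun i => ((1-s) * N g) * s^i)
      ((summable_geometric_of_lt_one hs.1.le hs.2).mul_left _) (fun i => ?_)
    have h1 : (0:ℝ) ≤ 1 - s := by linarith [hs.2]
    have h2 : (0:ℝ) ≤ s^i := pow_nonneg hs.1.le i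
    rw [Real.norm_eq_abs, abs_mul, abs_mul, abs_of_nonneg h1, abs_of_nonneg h2]
    calc (1-s)*s^i*|e i g| ≤ (1-s)*s^i*(N g) :=
          mul_le_mul_of_nonneg_left (hNb g (e i) (htr i)) (mul_nonneg h1 h2)
      _ = ((1-s) * N g) * s^i := by ring
  have hsummE : ∀ (s : ℝ), s ∈ Set.Ioo (0:ℝ) 1 → ∀ g : G,
      Summable (fun i : ℕ => (e i g) * s^i) := by
    intro s hs g
    refine Summable.of_norm_bounded (g := fun i => (N g) * s^i)
      ((summable_geometric_of_lt_one hs.1.le hs.2).mul_left _) (fun i => ?_)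
    have h2 : (0:ℝ) ≤ s^i := pow_nonneg hs.1.le i
    rw [Real.norm_eq_abs, abs_mul, abs_of_nonneg h2]
    exact mul_le_mul_of_nonneg_right (hNb g (e i) (htr i)) h2
  have hpre : ∀ s : ℝ, s ∈ Set.Ioo (0:ℝ) 1 →
      ∃ g : G, ∑' i, (1-s)*s^i*(e i g) = x := by
    intro s hs
    have h1s : (0:ℝ) < 1 - s := by linarith [hs.2]
    set σs : G →+ ℝ := AddMonoidHom.mk' (fun g => ∑' i, (1-s)*s^i*(e i g)) (by
      intro p q
      rw [← Summable.tsum_add (hsumm s hs p) (hsumm s hs q)]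
      exact tsum_congr fun i => by rw [map_add]; ring) with hσs
    have hσtr : IsTrace P u σs := by
      constructor
      · intro g hg
        exact tsum_nonneg fun i => mul_nonneg (mul_nonneg h1s.le (pow_nonneg hs.1.le i))
          ((htr i).1 g hg)
      · show ∑' i, (1-s)*s^i*(e i u) = 1
        have heu : ∀ i : ℕ, (1-s)*s^i*(e i u) = (1-s)*s^i := fun i => by
          rw [(htr i).2, mul_one]
        rw [tsum_congr heu]
        have : (fun i : ℕ => (1-s)*s^i) = fun i : ℕ => (1-s)*s^i := rfl
        rw [tsum_mul_left, tsum_geometric_of_lt_one hs.1.le hs.2,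
          mul_inv_cancel₀ h1s.ne']
    exact hx σs hσtr
  set Z : G → Set ℝ := fun g => {s | s ∈ Set.Ioo (0:ℝ) 1 ∧ ∑' i, (1-s)*s^i*(e i g) = x}
    with hZdef
  have hcover : Set.Ioo (0:ℝ) 1 ⊆ ⋃ g : G, Z g := by
    intro s hs
    obtain ⟨g, hg⟩ := hpre s hs
    exact Set.mem_iUnion.mpr ⟨g, hs, hg⟩
  have hIoo : ¬ (Set.Ioo (0:ℝ) 1).Countable := by
    intro h
    have h1 : (Cardinal.mk ↥(Set.Ioo (0:ℝ) 1)) ≤ Cardinal.aleph0 :=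
      Cardinal.mk_le_aleph0_iff.mpr (Set.countable_coe_iff.mpr h)
    rw [Cardinal.mk_Ioo_real one_pos] at h1
    exact Cardinal.aleph0_lt_continuum.not_ge h1
  have hfib : ∃ g : G, ¬ (Z g).Countable := by
    by_contra h
    push_neg at h
    exact hIoo ((Set.countable_iUnion h).mono hcover)
  obtain ⟨g, hg⟩ := hfib
  have hkey : ∀ i, e i g - x = 0 := by
    apply coeff_eq_zero_of_uncountable_zeros _ (N g + |x|) ?_ (Z g) hg (fun s hs => hs.1)
    · intro s hs
      obtain ⟨hsI, hsx⟩ := hs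
      have h1s : (0:ℝ) < 1 - s := by linarith [hsI.2]
      have S1 : Summable (fun i : ℕ => (e i g) * s^i) := hsummE s hsI g
      have S2 : Summable (fun i : ℕ => x * s^i) :=
        (summable_geometric_of_lt_one hsI.1.le hsI.2).mul_left x
      have hsplit : ∑' i, (e i g - x) * s^i
          = (∑' i, (e i g) * s^i) - ∑' i, x * s^i := by
        rw [← Summable.tsum_sub S1 S2]; exact tsum_congr fun i => by ring
      have hE : (1-s) * ∑' i, (e i g) * s^i = x := by
        rw [← tsum_mul_left, ← hsx]
        exact tsum_congr fun i => by ring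
      have hX : ∑' i, x * s^i = x * (1-s)⁻¹ := by
        rw [tsum_mul_left, tsum_geometric_of_lt_one hsI.1.le hsI.2]
      have hT : ∑' i, (e i g) * s^i = x * (1-s)⁻¹ := by
        rw [← hE, mul_comm (1-s), mul_assoc, mul_inv_cancel₀ h1s.ne', mul_one]
      rw [hsplit, hX, hT, sub_self]
    · intro i
      calc |e i g - x| ≤ |e i g| + |x| := abs_sub _ _
        _ ≤ N g + |x| := add_le_add_left (hNb g (e i) (htr i)) _
  refine ⟨g, fun σ hσ => ?_⟩
  have hmem := hdense σ hσ
  have hclosed : IsClosed {f : G → ℝ | f g = x} :=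
    isClosed_eq (continuous_apply g) continuous_const
  have hsub : (Set.range fun i => ⇑(e i)) ⊆ {f : G → ℝ | f g = x} := by
    rintro f ⟨i, rfl⟩
    have := hkey i
    simp only [Set.mem_setOf_eq]
    linarith [this]
  exact (closure_minimal hsub hclosed) hmem

/-- For a simple dimension group `(G,G⁺,u)` with
`G̃ = {g : τ g = τ' g for all traces τ, τ'}`, every trace `τ` restricts to a surjection from
`G̃` onto the image subgroup `I(G,G⁺,u) = ⋂_τ τ(G)`, with kernel the infinitesimal
subgroup `Inf(G)`. -/
theorem stmt4 {G : Type*} [AddCommGroup G] (P : Set G) (u : G)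
    (hG : IsSimpleDimensionGroup G P u)
    (τ : G →+ ℝ) (hτ : IsTrace P u τ) :
    ((fun g : G => τ g) ''
        {g : G | ∀ σ σ' : G →+ ℝ, IsTrace P u σ → IsTrace P u σ' → σ g = σ' g}
      = ⋂ σ ∈ {σ : G →+ ℝ | IsTrace P u σ}, Set.range σ) ∧
    ({g : G | (∀ σ σ' : G →+ ℝ, IsTrace P u σ → IsTrace P u σ' → σ g = σ' g) ∧ τ g = 0}
      = {g : G | ∀ σ : G →+ ℝ, IsTrace P u σ → σ g = 0}) := by
  constructor
  · apply Set.Subset.antisymm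
    · rintro x ⟨g, hg, rfl⟩
      exact Set.mem_iInter₂.mpr fun σ hσ => ⟨g, hg σ τ hσ hτ⟩
    · intro x hx
      rw [Set.mem_iInter₂] at hx
      have hx' : ∀ σ : G →+ ℝ, IsTrace P u σ → ∃ g : G, σ g = x := fun σ hσ => hx σ hσ
      obtain ⟨g, hg⟩ := exists_uniform_preimage hG x hx' τ hτ
      exact ⟨g, fun σ σ' hσ hσ' => (hg σ hσ).trans (hg σ' hσ').symm, hg τ hτ⟩
  · ext g
    simp only [Set.mem_setOf_eq]
    constructor
    · rintro ⟨h1, h2⟩ σ hσ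
      rw [h1 σ τ hσ hτ, h2]
    · intro h
      exact ⟨fun σ σ' hσ hσ' => (h σ hσ).trans (h σ' hσ').symm, h τ hτ⟩
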